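/- Let ψ(ζ) = ζ - 1 - log ζ with right branch inverse ψ₊⁻¹ : [0,∞) → [1,∞). For any fixed z > 0, the function f₂(y) := y·ψ₊⁻¹(z/y) - z is strictly increasing in y on (0,∞), and f₂(y) → 0 as y → 0⁺ (equivalently, y·ψ₊⁻¹(z/y) → z as y → 0⁺). -/

import Mathlib

open Real Filter Set

/-- The function `u ↦ ψ(u)/u = (u - 1 - log u)/u` is strictly increasing on `[1, ∞)`. -/
private lemma k_strictMono :
    StrictMonoOn (fun u : ℝ => (u - 1 - Real.log u) / u) (Set.Ici 1) := by
  have hderiv : ∀ u ∈ interior (Set.Ici (1:ℝ)),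
      HasDerivAt (fun u : ℝ => (u - 1 - Real.log u) / u) (Real.log u / u ^ 2) u := by
    intro u hu
    rw [interior_Ici] at hu
    have hu0 : (0:ℝ) < u := lt_trans one_pos hu
    have h1 : HasDerivAt (fun u : ℝ => u - 1 - Real.log u) (1 - 1/u) u := by
      have := ((hasDerivAt_id u).sub_const 1).sub (Real.hasDerivAt_log (ne_of_gt hu0))
      rw [one_div]; exact this
    have h2 := h1.div (hasDerivAt_id u) (ne_of_gt hu0)
    refine h2.congr_deriv ?_
    simp only [id]
    field_simp
    ring
  apply strictMonoOn_of_deriv_pos (convex_Ici 1)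
  · intro u hu
    have hu0 : u ≠ 0 := by
      have : (1:ℝ) ≤ u := hu
      linarith
    exact (((continuousAt_id.sub continuousAt_const).sub
      (Real.continuousAt_log hu0)).div continuousAt_id hu0).continuousWithinAt
  · intro u hu
    rw [(hderiv u hu).deriv]
    rw [interior_Ici] at hu
    have hu0 : (0:ℝ) < u := lt_trans one_pos hu
    exact div_pos (Real.log_pos hu) (pow_pos hu0 2)

theorem stmt_5 (ψinv : ℝ → ℝ)
    (hψinv : ∀ ξ : ℝ, 0 ≤ ξ →
      1 ≤ ψinv ξ ∧ ψinv ξ - 1 - Real.log (ψinv ξ) = ξ)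
    (z : ℝ) (hz : 0 < z) :
    StrictMonoOn (fun y : ℝ => y * ψinv (z / y) - z) (Set.Ioi 0) ∧
    Filter.Tendsto (fun y : ℝ => y * ψinv (z / y) - z)
      (nhdsWithin 0 (Set.Ioi 0)) (nhds 0) := by
  constructor
  · -- strict monotonicity
    intro y₁ hy₁ y₂ hy₂ hlt
    simp only [Set.mem_Ioi] at hy₁ hy₂
    obtain ⟨hu₁ge, hu₁eq⟩ := hψinv (z/y₁) (le_of_lt (div_pos hz hy₁))
    obtain ⟨hu₂ge, hu₂eq⟩ := hψinv (z/y₂) (le_of_lt (div_pos hz hy₂))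
    set u₁ := ψinv (z/y₁) with hu₁def
    set u₂ := ψinv (z/y₂) with hu₂def
    have hψ₁pos : 0 < u₁ - 1 - Real.log u₁ := by rw [hu₁eq]; exact div_pos hz hy₁
    have hψ₂pos : 0 < u₂ - 1 - Real.log u₂ := by rw [hu₂eq]; exact div_pos hz hy₂
    have hu₁0 : (0:ℝ) < u₁ := by linarith
    have hu₂0 : (0:ℝ) < u₂ := by linarith
    -- ψ(u₂) < ψ(u₁)
    have hψlt : u₂ - 1 - Real.log u₂ < u₁ - 1 - Real.log u₁ := by
      rw [hu₁eq, hu₂eq]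
      exact div_lt_div_of_pos_left hz hy₁ hlt
    -- the map k(u) = ψ(u)/u is monotone; ψ(u) = u·k(u) is monotone; hence u₂ < u₁
    have hk0 : ∀ u : ℝ, 1 ≤ u → 0 ≤ (u - 1 - Real.log u) / u := by
      intro u hu
      rcases eq_or_lt_of_le hu with h | h
      · simp [← h]
      · have := k_strictMono (Set.self_mem_Ici) (Set.mem_Ici.mpr hu) h
        simpa using this.le
    have hult : u₂ < u₁ := by
      by_contra h
      push_neg at h  -- h : u₁ ≤ u₂
      have hψmono : u₁ - 1 - Real.log u₁ ≤ u₂ - 1 - Real.log u₂ := by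
        have hk : (u₁ - 1 - Real.log u₁) / u₁ ≤ (u₂ - 1 - Real.log u₂) / u₂ := by
          rcases eq_or_lt_of_le h with he | hl
          · rw [he]
          · exact (k_strictMono (Set.mem_Ici.mpr hu₁ge) (Set.mem_Ici.mpr hu₂ge) hl).le
        calc u₁ - 1 - Real.log u₁ = u₁ * ((u₁ - 1 - Real.log u₁) / u₁) := by
              field_simp
          _ ≤ u₂ * ((u₂ - 1 - Real.log u₂) / u₂) :=
              mul_le_mul h hk (hk0 u₁ hu₁ge) (by linarith)
          _ = u₂ - 1 - Real.log u₂ := by field_simp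
      linarith
    -- now k(u₂) < k(u₁)
    have hk : (u₂ - 1 - Real.log u₂) / u₂ < (u₁ - 1 - Real.log u₁) / u₁ :=
      k_strictMono (Set.mem_Ici.mpr hu₂ge) (Set.mem_Ici.mpr hu₁ge) hult
    have key : (u₂ - 1 - Real.log u₂) * u₁ < (u₁ - 1 - Real.log u₁) * u₂ :=
      (div_lt_div_iff₀ hu₂0 hu₁0).mp hk
    -- y_i = z / ψ(u_i)
    have hy₁' : y₁ = z / (u₁ - 1 - Real.log u₁) := by
      rw [hu₁eq]; field_simp
    have hy₂' : y₂ = z / (u₂ - 1 - Real.log u₂) := by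
      rw [hu₂eq]; field_simp
    simp only
    have : y₁ * u₁ < y₂ * u₂ := by
      rw [hy₁', hy₂', div_mul_eq_mul_div, div_mul_eq_mul_div,
        div_lt_div_iff₀ hψ₁pos hψ₂pos]
      nlinarith [mul_lt_mul_of_pos_left key hz]
    linarith
  · -- the limit: squeeze 0 ≤ f₂(y) ≤ y + 2√(yz)
    have hupper : Filter.Tendsto (fun y : ℝ => y + 2 * Real.sqrt (y * z))
        (nhdsWithin 0 (Set.Ioi 0)) (nhds 0) := by
      have hc : Continuous fun y : ℝ => y + 2 * Real.sqrt (y * z) := by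
        continuity
      have := hc.tendsto 0
      simp only [zero_mul, Real.sqrt_zero, mul_zero, add_zero] at this
      exact this.mono_left nhdsWithin_le_nhds
    apply tendsto_of_tendsto_of_tendsto_of_le_of_le' tendsto_const_nhds hupper
    · -- 0 ≤ f₂(y)
      filter_upwards [self_mem_nhdsWithin] with y hy
      simp only [Set.mem_Ioi] at hy
      obtain ⟨huge, hueq⟩ := hψinv (z/y) (le_of_lt (div_pos hz hy))
      set u := ψinv (z/y)
      have hlog : 0 ≤ Real.log u := Real.log_nonneg huge
      have hzy : y * (u - 1 - Real.log u) = z := by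
        rw [hueq]; field_simp
      nlinarith [mul_nonneg hy.le hlog]
    · -- f₂(y) ≤ y + 2√(yz)
      filter_upwards [self_mem_nhdsWithin] with y hy
      simp only [Set.mem_Ioi] at hy
      obtain ⟨huge, hueq⟩ := hψinv (z/y) (le_of_lt (div_pos hz hy))
      set u := ψinv (z/y)
      have hu0 : (0:ℝ) < u := by linarith
      set s := Real.sqrt u with hs
      have hs1 : (1:ℝ) ≤ s := by
        rw [hs, show (1:ℝ) = Real.sqrt 1 by simp]
        exact Real.sqrt_le_sqrt huge
      have hs2 : s ^ 2 = u := Real.sq_sqrt hu0.le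
      -- log u ≤ 2(s - 1)
      have hlog : Real.log u ≤ 2 * (s - 1) := by
        have h1 : Real.log s ≤ s - 1 := Real.log_le_sub_one_of_pos (by linarith)
        have h2 : Real.log s = Real.log u / 2 := Real.log_sqrt hu0.le
        linarith
      -- (s-1)^2 ≤ ψ(u) = z/y
      have hsq : (s - 1) ^ 2 ≤ z / y := by
        rw [← hueq]
        nlinarith
      -- s - 1 ≤ √(z/y)
      have hsle : s - 1 ≤ Real.sqrt (z / y) := by
        have := Real.sqrt_le_sqrt hsq
        rwa [Real.sqrt_sq (by linarith)] at this
      -- u ≤ (1 + √(z/y))^2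
      have hub : u ≤ (1 + Real.sqrt (z / y)) ^ 2 := by
        rw [← hs2]
        have h0 : 0 ≤ s := by linarith
        nlinarith [Real.sqrt_nonneg (z / y)]
      -- y * √(z/y) = √(yz)
      have hys : y * Real.sqrt (z / y) = Real.sqrt (y * z) := by
        rw [show y * Real.sqrt (z / y) = Real.sqrt (y ^ 2) * Real.sqrt (z / y) by
            rw [Real.sqrt_sq hy.le],
          ← Real.sqrt_mul (sq_nonneg y)]
        congr 1
        field_simp
      have hr2 : Real.sqrt (z / y) ^ 2 = z / y := Real.sq_sqrt (div_pos hz hy).le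
      have hyz : y * (z / y) = z := by field_simp
      have hexp : y * (1 + Real.sqrt (z / y)) ^ 2 = y + 2 * Real.sqrt (y * z) + z := by
        calc y * (1 + Real.sqrt (z / y)) ^ 2
            = y + 2 * (y * Real.sqrt (z / y)) + y * (Real.sqrt (z / y) ^ 2) := by ring
          _ = y + 2 * Real.sqrt (y * z) + z := by rw [hys, hr2, hyz]
      have : y * u ≤ y * (1 + Real.sqrt (z / y)) ^ 2 :=
        mul_le_mul_of_nonneg_left hub hy.le
      show y * u - z ≤ y + 2 * Real.sqrt (y * z)
      linarith
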